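/- Let c > 0 and α ∈ (0,1), and set p_k = α^{3-k} for k ∈ {0,1,2,3}. Define ρ = (√(1+α) - 1)/α. Then ρ ∈ (0,1), and ρ is the unique solution in (0,1) of p_3 - (1-ρ)p_2 - ρ p_1 = √((p_3-p_2)(p_3-p_1)); equivalently, the first-order condition (p_2-p_1)/(p_3 - (1-ρ)p_2 - ρ p_1)² = 1/(p_3-p_2) - 1/(p_3-p_1) holds. -/

import Mathlib

/-- O-ring production `p_k = α^{3-k}`: `ρ = (√(1+α)-1)/α` lies in `(0,1)`, is the unique
solution in `(0,1)` of `p₃ - (1-ρ)p₂ - ρp₁ = √((p₃-p₂)(p₃-p₁))`, and satisfies the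
first-order condition. -/
theorem stmt_11 (c α : ℝ) (hc : 0 < c) (hα0 : 0 < α) (hα1 : α < 1)
    (p : ℕ → ℝ) (hp : ∀ k, k ≤ 3 → p k = α ^ (3 - k))
    (ρ : ℝ) (hρ : ρ = (Real.sqrt (1 + α) - 1) / α) :
    ρ ∈ Set.Ioo (0 : ℝ) 1
    ∧ p 3 - (1 - ρ) * p 2 - ρ * p 1 = Real.sqrt ((p 3 - p 2) * (p 3 - p 1))
    ∧ (∀ ρ' ∈ Set.Ioo (0 : ℝ) 1,
        p 3 - (1 - ρ') * p 2 - ρ' * p 1 = Real.sqrt ((p 3 - p 2) * (p 3 - p 1)) → ρ' = ρ)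
    ∧ (p 2 - p 1) / (p 3 - (1 - ρ) * p 2 - ρ * p 1) ^ 2
        = 1 / (p 3 - p 2) - 1 / (p 3 - p 1) := by
  have h3 : p 3 = 1 := by simpa using hp 3 (by norm_num)
  have h2 : p 2 = α := by simpa using hp 2 (by norm_num)
  have h1 : p 1 = α ^ 2 := by simpa using hp 1 (by norm_num)
  set s := Real.sqrt (1 + α) with hs
  have h1α : (0:ℝ) < 1 + α := by linarith
  have hs2 : s ^ 2 = 1 + α := Real.sq_sqrt h1α.le
  have hs1 : 1 < s := by
    nlinarith [hs2, Real.sqrt_nonneg (1 + α)]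
  have hslt : s < 1 + α := by
    rw [hs]
    exact (Real.sqrt_lt' h1α).mpr (by nlinarith)
  have hmem : ρ ∈ Set.Ioo (0:ℝ) 1 := by
    constructor
    · rw [hρ]; exact div_pos (by linarith) hα0
    · rw [hρ, div_lt_one hα0]; linarith
  have key : p 3 - (1 - ρ) * p 2 - ρ * p 1 = (1 - α) * s := by
    rw [h3, h2, h1, hρ]
    field_simp
    ring
  have hsq : Real.sqrt ((p 3 - p 2) * (p 3 - p 1)) = (1 - α) * s := by
    rw [h3, h2, h1]
    have : (1 - α) * (1 - α ^ 2) = ((1 - α) * s) ^ 2 := by nlinarith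
    rw [this, Real.sqrt_sq (by nlinarith)]
  refine ⟨hmem, by rw [key, hsq], ?_, ?_⟩
  · intro ρ' _ hρ'
    rw [hsq, h3, h2, h1] at hρ'
    have : ρ' * (α * (1 - α)) = ρ * (α * (1 - α)) := by
      rw [hρ]; field_simp; nlinarith
    have hne : α * (1 - α) ≠ 0 := ne_of_gt (by nlinarith)
    exact mul_right_cancel₀ hne this
  · rw [key, h3, h2, h1]
    have hd1 : (1:ℝ) - α ≠ 0 := by linarith
    have hd2 : (1:ℝ) - α ^ 2 ≠ 0 := by nlinarith
    have hpow : ((1 - α) * s) ^ 2 = (1 - α) ^ 2 * (1 + α) := by rw [mul_pow, hs2]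
    rw [hpow]
    have h2' : (1:ℝ) + α ≠ 0 := h1α.ne'
    rw [div_eq_iff (by positivity)]
    field_simp
    ring
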